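/- Full characterization: a one-sided matching problem (A, 𝒜, H, L, μ^E, μ) is rationalizable if and only if for all same-type individuals a, b in the same strongly connected component of G^big, μ(a) = μ(b). -/

import Mathlib

/-- Arc of the allocation graph G^big: `(a,b)` is an arc iff `μ a = μE b`. -/
def arcBig {A H : Type*} (μE μ : A → H) (a b : A) : Prop := μ a = μE b

/-- Two agents lie in the same strongly connected component of G^big. -/
def sameSCC {A H : Type*} (μE μ : A → H) (a b : A) : Prop :=
  Relation.ReflTransGen (arcBig μE μ) a b ∧ Relation.ReflTransGen (arcBig μE μ) b a

/-- For each house type, the number of agents allocated it equals the number endowed with it. -/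
def BalancedAlloc {A H : Type*} (μE μ : A → H) : Prop :=
  ∀ h : H, Nat.card {a : A // μ a = h} = Nat.card {a : A // μE a = h}

/-- A directed cycle: a nonempty list of distinct vertices with consecutive arcs,
and an arc from the last vertex back to the first. A single vertex with a
self-loop is a cycle of length 1. -/
def IsCycle {V : Type*} (R : V → V → Prop) (l : List V) : Prop :=
  l ≠ [] ∧ l.Nodup ∧ l.Chain' R ∧ ∀ h : l ≠ [], R (l.getLast h) (l.head h)

/-- A blocking coalition: a nonempty coalition `C` and a reallocation `μ'` of its
own endowments (as multisets) making every member weakly better off and at least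
one member strictly better off, w.r.t. the strict type-preference profile `P`. -/
def Blocking {A H T : Type*} (tp : A → T) (μE μ : A → H)
    (P : T → LinearOrder H) : Prop :=
  ∃ (C : Finset A) (μ' : A → H),
    C.Nonempty ∧
    C.val.map μ' = C.val.map μE ∧
    (∀ a ∈ C, (P (tp a)).le (μ a) (μ' a)) ∧
    (∃ a ∈ C, (P (tp a)).lt (μ a) (μ' a))

/-- The allocation `μ` is rationalizable: some strict type-preference profile places
it in the strong core (no blocking coalition). -/
def Rationalizable {A H T : Type*} (tp : A → T) (μE μ : A → H) : Prop :=
  ∃ P : T → LinearOrder H, ¬ Blocking tp μE μ P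

namespace Stmt11Aux

variable {A H : Type*} (μE μ : A → H)

/-- house relation -/
def hR (h h' : H) : Prop := ∃ c, μE c = h ∧ μ c = h'

/-- reflexive transitive closure of the house relation -/
def hRS (h h' : H) : Prop := Relation.ReflTransGen (hR μE μ) h h'

/-- same house SCC -/
def Hsim (h h' : H) : Prop := hRS μE μ h h' ∧ hRS μE μ h' h

variable {μE μ}

lemma hsim_refl (h : H) : Hsim μE μ h h := ⟨.refl, .refl⟩

lemma hsim_symm {h h' : H} (hh : Hsim μE μ h h') : Hsim μE μ h' h := ⟨hh.2, hh.1⟩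

lemma hsim_trans {h h' h'' : H} (h1 : Hsim μE μ h h') (h2 : Hsim μE μ h' h'') :
    Hsim μE μ h h'' := ⟨h1.1.trans h2.1, h2.2.trans h1.2⟩

lemma arc_house {a b : A} (hab : arcBig μE μ a b) : hR μE μ (μ a) (μ b) :=
  ⟨b, hab.symm, rfl⟩

/-- agent reachability gives house reachability to the endowment -/
lemma reach_house {a b : A} (hab : Relation.ReflTransGen (arcBig μE μ) a b) :
    a = b ∨ hRS μE μ (μ a) (μE b) := by
  rcases hab.cases_tail with h | ⟨c, hac, hcb⟩
  · exact Or.inl h.symm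
  · refine Or.inr ?_
    have h1 : hRS μE μ (μ a) (μ c) :=
      Relation.ReflTransGen.lift μ (fun x y hxy => arc_house hxy) _ _ hac
    exact hcb ▸ h1

/-- house reachability to an endowment gives agent reachability -/
lemma house_reach {a b : A} (hr : hRS μE μ (μ a) (μE b)) :
    Relation.ReflTransGen (arcBig μE μ) a b := by
  have key : ∀ h : H, hRS μE μ h (μE b) →
      ∀ x : A, μ x = h → Relation.ReflTransGen (arcBig μE μ) x b := by
    intro h hh
    induction hh using Relation.ReflTransGen.head_induction_on with
    | refl => intro x hx; exact Relation.ReflTransGen.single hx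
    | head hstep _ ih =>
      rename_i h₀ h₁
      intro x hx
      obtain ⟨c, hcE, hcμ⟩ := hstep
      have hxc : arcBig μE μ x c := by rw [arcBig, hx, hcE]
      exact Relation.ReflTransGen.head hxc (ih c hcμ)
  exact key (μ a) hr a rfl

variable [Fintype A] [Fintype H]

/-- Key balance lemma: each agent's allocated house reaches its endowed house. -/
lemma lemma1 (hbal : BalancedAlloc μE μ) (a : A) : hRS μE μ (μ a) (μE a) := by
  classical
  set D : Finset H := Finset.univ.filter (fun h => hRS μE μ (μ a) h) with hD
  have hsub : Finset.univ.filter (fun x : A => μE x ∈ D) ⊆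
      Finset.univ.filter (fun x : A => μ x ∈ D) := by
    intro x hx
    simp only [hD, Finset.mem_filter, Finset.mem_univ, true_and] at hx ⊢
    exact hx.tail ⟨x, rfl, rfl⟩
  have hcard : ∀ ν : A → H, (Finset.univ.filter (fun x : A => ν x ∈ D)).card =
      ∑ h ∈ D, (Finset.univ.filter (fun x : A => ν x = h)).card := by
    intro ν
    rw [Finset.card_eq_sum_card_fiberwise (f := ν) (s := Finset.univ.filter (fun x : A => ν x ∈ D)) (t := D)
      (fun x hx => (Finset.mem_filter.mp hx).2)]
    refine Finset.sum_congr rfl fun h hh => ?_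
    congr 1
    ext x
    simp only [Finset.mem_filter, Finset.mem_univ, true_and]
    exact ⟨fun hx => hx.2, fun hx => ⟨hx ▸ hh, hx⟩⟩
  have hnc : ∀ (ν : A → H) (h : H),
      Nat.card {x : A // ν x = h} = (Finset.univ.filter (fun x : A => ν x = h)).card := by
    intro ν h
    rw [Nat.card_eq_fintype_card, Fintype.card_subtype]
  have heq : (Finset.univ.filter (fun x : A => μ x ∈ D)).card =
      (Finset.univ.filter (fun x : A => μE x ∈ D)).card := by
    rw [hcard μ, hcard μE]
    refine Finset.sum_congr rfl fun h _ => ?_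
    rw [← hnc μ h, ← hnc μE h, hbal h]
  have := Finset.eq_of_subset_of_card_le hsub heq.le
  have ha : a ∈ Finset.univ.filter (fun x : A => μ x ∈ D) := by
    refine Finset.mem_filter.mpr ⟨Finset.mem_univ _, ?_⟩
    rw [hD]
    exact Finset.mem_filter.mpr ⟨Finset.mem_univ _, Relation.ReflTransGen.refl⟩
  rw [← this] at ha
  have ha2 := (Finset.mem_filter.mp ha).2
  rw [hD] at ha2
  exact (Finset.mem_filter.mp ha2).2

lemma hsim_mu_muE (hbal : BalancedAlloc μE μ) (a : A) : Hsim μE μ (μ a) (μE a) :=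
  ⟨lemma1 hbal a, Relation.ReflTransGen.single ⟨a, rfl, rfl⟩⟩

/-- same SCC iff allocated houses are in the same house SCC -/
lemma sameSCC_iff (hbal : BalancedAlloc μE μ) (a b : A) :
    sameSCC μE μ a b ↔ Hsim μE μ (μ a) (μ b) := by
  constructor
  · rintro ⟨hab, hba⟩
    constructor
    · rcases reach_house hab with h | h
      · subst h; exact Relation.ReflTransGen.refl
      · exact h.tail ⟨b, rfl, rfl⟩
    · rcases reach_house hba with h | h
      · subst h; exact Relation.ReflTransGen.refl
      · exact h.tail ⟨a, rfl, rfl⟩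
  · rintro ⟨hab, hba⟩
    exact ⟨house_reach (hab.trans (lemma1 hbal b)), house_reach (hba.trans (lemma1 hbal a))⟩

/-- deduplicate a chain keeping head? and getLast? -/
lemma dedup_chain {R : A → A → Prop} :
    ∀ n (l : List A), l.length ≤ n → l.Chain' R → l ≠ [] →
      ∃ l' : List A, l'.Chain' R ∧ l'.Nodup ∧ l' ≠ [] ∧ l'.head? = l.head? ∧
        l'.getLast? = l.getLast? ∧ l' ⊆ l := by
  intro n
  induction n with
  | zero => intro l hl _ hne; interval_cases hl' : l.length <;> simp_all
  | succ n ih =>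
    intro l hl hchain hne
    match l with
    | [] => exact absurd rfl hne
    | [x] => exact ⟨[x], List.isChain_singleton x, List.nodup_singleton x,
        List.cons_ne_nil x [], rfl, rfl, fun z hz => hz⟩
    | x :: y :: rest =>
      by_cases hx : x ∈ y :: rest
      · obtain ⟨u, v, huv⟩ := List.append_of_mem hx
        have hsuffix : (x :: v) <:+ (x :: y :: rest) := by
          rw [huv]
          exact ⟨x :: u, by simp⟩
        have hchain2 : (x :: v).Chain' R := hchain.suffix hsuffix
        have hlen : (x :: v).length ≤ n := by
          have hl' := hl
          rw [huv] at hl'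
          simp only [List.length_cons, List.length_append] at hl'
          simp only [List.length_cons]
          omega
        obtain ⟨l', h1, h2, h3, h4, h5, h6⟩ := ih (x :: v) hlen hchain2 (by simp)
        refine ⟨l', h1, h2, h3, by simpa using h4, ?_, fun z hz => ?_⟩
        · rw [h5, huv]
          rw [show x :: (u ++ x :: v) = (x :: u) ++ (x :: v) by simp,
            List.getLast?_append]
          rw [List.getLast?_eq_getLast (List.cons_ne_nil x v)]
          rfl
        · have := h6 hz
          exact hsuffix.subset this
      · have hchain' : (y :: rest).Chain' R := (List.isChain_cons.mp hchain).2
        have hlen : (y :: rest).length ≤ n := by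
          have hl' := hl
          simp only [List.length_cons] at hl'
          simp only [List.length_cons]
          omega
        obtain ⟨l', h1, h2, h3, h4, h5, h6⟩ := ih (y :: rest) hlen hchain' (by simp)
        refine ⟨x :: l', ?_, ?_, by simp, by simp, ?_, ?_⟩
        · refine List.isChain_cons.mpr ?_
          refine ⟨fun z hz => ?_, h1⟩
          have : z = y := by
            rw [h4] at hz; simp at hz; exact hz.symm
          rw [this]
          exact (List.isChain_cons.mp hchain).1 y (by simp)
        · rw [List.nodup_cons]
          exact ⟨fun hc => hx (h6 hc), h2⟩
        · rw [List.getLast?_cons_cons]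
          rw [← h5]
          match l', h3 with
          | w :: l'', _ => rw [List.getLast?_cons_cons]
        · intro z hz
          rcases List.mem_cons.mp hz with h | h
          · simp [h]
          · simp [h6 h]

/-- from agent reachability get a nodup chain -/
lemma exists_nodup_path {a b : A} (hab : Relation.ReflTransGen (arcBig μE μ) a b) :
    ∃ l : List A, l.Chain' (arcBig μE μ) ∧ l.Nodup ∧ l ≠ [] ∧
      l.head? = some a ∧ l.getLast? = some b := by
  obtain ⟨l, hc, hlast⟩ := List.exists_isChain_cons_of_relationReflTransGen hab
  have hc' : (a :: l).Chain' (arcBig μE μ) := hc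
  obtain ⟨l', h1, h2, h3, h4, h5, _⟩ :=
    dedup_chain (a :: l).length (a :: l) le_rfl hc' (by simp)
  refine ⟨l', h1, h2, h3, by simpa using h4, ?_⟩
  rw [h5, List.getLast?_eq_getLast (l := a :: l) (by simp), hlast]

/-- rotation lemma: replacing the last element's house by `v` yields `v` plus
the endowments of the tail, as multisets. -/
lemma rot [DecidableEq A] (v : H) : ∀ (l : List A) (z : A), l.Chain' (arcBig μE μ) → l.Nodup →
    l.getLast? = some z →
    (↑(l.map (fun x => if x = z then v else μ x)) : Multiset H) =
      v ::ₘ (↑(l.tail.map μE) : Multiset H) := by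
  intro l
  induction l with
  | nil => intro z _ _ h; simp at h
  | cons x l ih =>
    intro z hchain hnodup hlast
    match l, hlast with
    | [], hlast =>
      have hxz : x = z := by simpa using hlast
      subst hxz
      simp
    | y :: l, hlast =>
      have hlast' : (y :: l).getLast? = some z := by
        rw [← List.getLast?_cons_cons (a := x)]
        exact hlast
      have hz : z ∈ y :: l := List.mem_of_getLast? hlast'
      have hxz : x ≠ z := by
        intro h
        exact (List.nodup_cons.mp hnodup).1 (h ▸ hz)
      have harc : arcBig μE μ x y := (List.isChain_cons_cons.mp hchain).1
      have ihr := ih z (List.isChain_cons_cons.mp hchain).2 (List.nodup_cons.mp hnodup).2 hlast'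
      have hfx : (fun x => if x = z then v else μ x) x = μ x := if_neg hxz
      calc (↑(List.map (fun x => if x = z then v else μ x) (x :: y :: l)) : Multiset H)
          = μ x ::ₘ ↑(List.map (fun x => if x = z then v else μ x) (y :: l)) := by
            rw [List.map_cons, if_neg hxz, Multiset.cons_coe]
        _ = μ x ::ₘ (v ::ₘ ↑(List.map μE ((y :: l).tail))) := by rw [ihr]
        _ = v ::ₘ (μ x ::ₘ ↑(List.map μE l)) := by
            rw [List.tail_cons]; exact Multiset.cons_swap _ _ _
        _ = v ::ₘ ↑(List.map μE ((x :: y :: l)).tail) := by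
            rw [show (μ x : H) = μE y from harc, List.tail_cons, List.map_cons,
              Multiset.cons_coe]

section Necessity

variable {T : Type*} (tp : A → T)

set_option linter.unusedSectionVars false in
/-- Core necessity construction: a strict preference between two same-SCC
same-type agents' houses yields a blocking coalition. -/
lemma blocking_of_lt (hbal : BalancedAlloc μE μ) (P : T → LinearOrder H) {a b : A}
    (htp : tp a = tp b) (hscc : sameSCC μE μ a b) (hlt : (P (tp a)).lt (μ a) (μ b)) :
    ∃ (C : Finset A) (μ' : A → H),
      C.Nonempty ∧
      C.val.map μ' = C.val.map μE ∧
      (∀ x ∈ C, (P (tp x)).le (μ x) (μ' x)) ∧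
      (∃ x ∈ C, (P (tp x)).lt (μ x) (μ' x)) := by
  classical
  letI : LinearOrder H := P (tp a)
  have hlt' : μ a < μ b := hlt
  have hne : μ a ≠ μ b := ne_of_lt hlt'
  have hab : a ≠ b := fun h => hne (by rw [h])
  -- find an agent endowed with μ b
  have hy : ∃ y : A, μE y = μ b := by
    have h1 : 0 < Nat.card {x : A // μ x = μ b} :=
      Nat.card_pos_iff.mpr ⟨⟨⟨b, rfl⟩⟩, inferInstance⟩
    rw [hbal (μ b)] at h1
    obtain ⟨⟨y, hy⟩⟩ := (Nat.card_pos_iff.mp h1).1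
    exact ⟨y, hy⟩
  obtain ⟨y, hyE⟩ := hy
  -- y reaches a
  have hreach : Relation.ReflTransGen (arcBig μE μ) y a := by
    apply house_reach
    have h1 : hRS μE μ (μ y) (μ b) := hyE ▸ lemma1 hbal y
    have h2 : hRS μE μ (μ b) (μE a) := by
      rcases reach_house hscc.2 with h | h
      · exact absurd h hab.symm
      · exact h
    exact h1.trans h2
  obtain ⟨l, hchain, hnodup, hlne, hhead, hlast⟩ := exists_nodup_path hreach
  set μ'' : A → H := fun x => if x = a then μ b else μ x with hμ''
  refine ⟨⟨(↑l : Multiset A), Multiset.coe_nodup.mpr hnodup⟩, μ'', ?_, ?_, ?_, ?_⟩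
  · exact ⟨a, by
      simp only [Finset.mem_mk, Multiset.mem_coe]
      exact List.mem_of_getLast? hlast⟩
  · show Multiset.map μ'' ↑l = Multiset.map μE ↑l
    rw [Multiset.map_coe, Multiset.map_coe]
    rw [rot (μ b) l a hchain hnodup hlast]
    obtain ⟨t, hlt2⟩ : ∃ t, l = y :: t := by
      match l, hhead with
      | x :: t, hhead => exact ⟨t, by simpa using (by simpa using hhead : x = y) ▸ rfl⟩
    rw [hlt2]
    simp only [List.map_cons, List.tail_cons, Multiset.cons_coe]
    rw [hyE]
  · intro x hx
    by_cases hxa : x = a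
    · subst hxa
      have : μ'' x = μ b := by simp [hμ'']
      rw [this]
      exact le_of_lt hlt'
    · have : μ'' x = μ x := by simp [hμ'', hxa]
      rw [this]
      exact (P (tp x)).le_refl _
  · refine ⟨a, by
      simp only [Finset.mem_mk, Multiset.mem_coe]
      exact List.mem_of_getLast? hlast, ?_⟩
    have : μ'' a = μ b := by simp [hμ'']
    rw [this]
    exact hlt'

end Necessity

noncomputable section Sufficiency

open Classical

variable (μE μ)

/-- number of houses reachable from `h` -/
def rho (h : H) : ℕ := (Finset.univ.filter (fun h' => hRS μE μ h h')).card

/-- the house SCC of `h` as a finset -/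
def cls (h : H) : Finset H := Finset.univ.filter (fun h' => Hsim μE μ h h')

/-- index of the minimal element of the class of `h` -/
def mIdx (h : H) : ℕ :=
  (((cls μE μ h).image (fun h' => ((Fintype.equivFin H) h' : ℕ)))).min'
    (Finset.Nonempty.image ⟨h, Finset.mem_filter.mpr ⟨Finset.mem_univ _, hsim_refl h⟩⟩ _)

/-- potential function: constant on house SCCs, strictly decreasing along the
house relation across SCCs, and injective on SCCs -/
def psi (h : H) : ℕ := rho μE μ h * Fintype.card H + mIdx μE μ h

variable {μE μ}

lemma rho_mono {h h' : H} (hh : hRS μE μ h h') : rho μE μ h' ≤ rho μE μ h := by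
  apply Finset.card_le_card
  intro x hx
  simp only [Finset.mem_filter, Finset.mem_univ, true_and] at hx ⊢
  exact hh.trans hx

lemma rho_strict {h h' : H} (hh : hRS μE μ h h') (hnot : ¬ hRS μE μ h' h) :
    rho μE μ h' < rho μE μ h := by
  apply Finset.card_lt_card
  rw [Finset.ssubset_iff_of_subset]
  · refine ⟨h, ?_, ?_⟩
    · simp only [Finset.mem_filter, Finset.mem_univ, true_and]
      exact Relation.ReflTransGen.refl
    · simp only [Finset.mem_filter, Finset.mem_univ, true_and]
      exact hnot
  · intro x hx
    simp only [Finset.mem_filter, Finset.mem_univ, true_and] at hx ⊢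
    exact hh.trans hx

lemma cls_eq {h h' : H} (hh : Hsim μE μ h h') : cls μE μ h = cls μE μ h' := by
  ext x
  simp only [cls, Finset.mem_filter, Finset.mem_univ, true_and]
  exact ⟨fun hx => hsim_trans (hsim_symm hh) hx, fun hx => hsim_trans hh hx⟩

lemma mIdx_lt (h : H) : mIdx μE μ h < Fintype.card H := by
  have hmem : ((Fintype.equivFin H) h : ℕ) ∈
      (cls μE μ h).image (fun h' => ((Fintype.equivFin H) h' : ℕ)) :=
    Finset.mem_image_of_mem _ (Finset.mem_filter.mpr ⟨Finset.mem_univ _, hsim_refl h⟩)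
  exact lt_of_le_of_lt (Finset.min'_le _ _ hmem) ((Fintype.equivFin H) h).2

lemma psi_eq_of_hsim {h h' : H} (hh : Hsim μE μ h h') : psi μE μ h = psi μE μ h' := by
  have h1 : rho μE μ h = rho μE μ h' := le_antisymm (rho_mono hh.2) (rho_mono hh.1)
  have h2 : mIdx μE μ h = mIdx μE μ h' := by
    unfold mIdx
    congr 1
    rw [cls_eq hh]
  rw [psi, psi, h1, h2]

lemma hsim_of_mIdx_eq {h h' : H} (hh : mIdx μE μ h = mIdx μE μ h') : Hsim μE μ h h' := by
  have h1 : mIdx μE μ h ∈ (cls μE μ h).image (fun h'' => ((Fintype.equivFin H) h'' : ℕ)) := by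
    unfold mIdx; exact Finset.min'_mem _ _
  have h2 : mIdx μE μ h' ∈ (cls μE μ h').image (fun h'' => ((Fintype.equivFin H) h'' : ℕ)) := by
    unfold mIdx; exact Finset.min'_mem _ _
  rw [Finset.mem_image] at h1 h2
  obtain ⟨u, hu, hu2⟩ := h1
  obtain ⟨u', hu', hu'2⟩ := h2
  have : u = u' := by
    have : ((Fintype.equivFin H) u : ℕ) = ((Fintype.equivFin H) u' : ℕ) := by
      rw [hu2, hu'2, ← hh]
    exact (Fintype.equivFin H).injective (Fin.ext this)
  subst this
  simp only [cls, Finset.mem_filter, Finset.mem_univ, true_and] at hu hu'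
  exact hsim_trans hu (hsim_symm hu')

lemma hsim_of_psi_eq {h h' : H} (hh : psi μE μ h = psi μE μ h') : Hsim μE μ h h' := by
  apply hsim_of_mIdx_eq
  have e1 : psi μE μ h % Fintype.card H = mIdx μE μ h := by
    rw [psi, mul_comm, Nat.mul_add_mod, Nat.mod_eq_of_lt (mIdx_lt h)]
  have e2 : psi μE μ h' % Fintype.card H = mIdx μE μ h' := by
    rw [psi, mul_comm, Nat.mul_add_mod, Nat.mod_eq_of_lt (mIdx_lt h')]
  rw [← e1, ← e2, hh]

lemma psi_anti {h h' : H} (hh : hRS μE μ h h') : psi μE μ h' ≤ psi μE μ h := by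
  induction hh with
  | refl => exact le_rfl
  | tail hc hstep ih =>
    rename_i c h'
    refine le_trans ?_ ih
    by_cases hback : hRS μE μ h' c
    · exact le_of_eq (psi_eq_of_hsim ⟨hback, Relation.ReflTransGen.single hstep⟩)
    · have hstrict : rho μE μ h' < rho μE μ c :=
        rho_strict (Relation.ReflTransGen.single hstep) hback
      have hlt : psi μE μ h' < (rho μE μ h' + 1) * Fintype.card H := by
        rw [psi, add_mul, one_mul]
        exact Nat.add_lt_add_left (mIdx_lt h') _
      refine le_of_lt ?_
      calc psi μE μ h' < (rho μE μ h' + 1) * Fintype.card H := hlt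
        _ ≤ rho μE μ c * Fintype.card H := Nat.mul_le_mul_right _ hstrict
        _ ≤ psi μE μ c := Nat.le_add_right _ _

lemma rho_le (h : H) : rho μE μ h ≤ Fintype.card H := by
  rw [← Finset.card_univ]
  exact Finset.card_le_card (Finset.filter_subset _ _)

lemma psi_lt_M (h : H) :
    psi μE μ h < Fintype.card H * Fintype.card H + Fintype.card H := by
  have := mIdx_lt (μE := μE) (μ := μ) h
  have := rho_le (μE := μE) (μ := μ) h
  rw [psi]
  have h1 : rho μE μ h * Fintype.card H ≤ Fintype.card H * Fintype.card H :=
    Nat.mul_le_mul_right _ (rho_le h)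
  omega

end Sufficiency

noncomputable section Kappa

open Classical

variable {T : Type*} {tp : A → T}

/-- secondary key: chosen houses of the type first, then an injective tiebreak -/
def gInd (tp' : A → T) (μ' : A → H) (t : T) (h : H) : ℕ :=
  (if ∃ x, tp' x = t ∧ μ' x = h then Fintype.card H else 0) + ((Fintype.equivFin H) h : ℕ)

/-- preference key: smaller ψ strictly better, then the type's chosen houses,
then tiebreak; larger κ = more preferred -/
def kappa (μE' μ' : A → H) (tp' : A → T) (t : T) (h : H) : ℕ :=
  (Fintype.card H * Fintype.card H + Fintype.card H - psi μE' μ' h) * (2 * Fintype.card H)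
    + gInd tp' μ' t h

lemma gInd_lt (t : T) (h : H) : gInd tp μ t h < 2 * Fintype.card H := by
  have h1 : ((Fintype.equivFin H) h : ℕ) < Fintype.card H := ((Fintype.equivFin H) h).2
  rw [gInd]
  split <;> omega

lemma kappa_mod (t : T) (h : H) :
    kappa μE μ tp t h % (2 * Fintype.card H) = gInd tp μ t h := by
  rw [kappa, mul_comm _ (2 * Fintype.card H), Nat.mul_add_mod,
    Nat.mod_eq_of_lt (gInd_lt t h)]

lemma kappa_inj (t : T) : Function.Injective (kappa μE μ tp t) := by
  intro h h' heq
  have hg : gInd tp μ t h = gInd tp μ t h' := by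
    rw [← kappa_mod (μE := μE) t h, ← kappa_mod (μE := μE) t h', heq]
  have h1 : ((Fintype.equivFin H) h : ℕ) < Fintype.card H := ((Fintype.equivFin H) h).2
  have h1' : ((Fintype.equivFin H) h' : ℕ) < Fintype.card H := ((Fintype.equivFin H) h').2
  rw [gInd, gInd] at hg
  have hι : ((Fintype.equivFin H) h : ℕ) = ((Fintype.equivFin H) h' : ℕ) := by
    split at hg <;> split at hg <;> omega
  exact (Fintype.equivFin H).injective (Fin.ext hι)

lemma psi_le_of_kappa_le {t : T} {x y : H} (hk : kappa μE μ tp t x ≤ kappa μE μ tp t y) :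
    psi μE μ y ≤ psi μE μ x := by
  by_contra hcon
  push_neg at hcon
  have hM := psi_lt_M (μE := μE) (μ := μ) y
  set M := Fintype.card H * Fintype.card H + Fintype.card H with hM'
  have hsub : M - psi μE μ y < M - psi μE μ x :=
    Nat.sub_lt_sub_left (lt_trans hcon hM) hcon
  have : kappa μE μ tp t y < kappa μE μ tp t x := by
    calc kappa μE μ tp t y
        < (M - psi μE μ y) * (2 * Fintype.card H) + 2 * Fintype.card H :=
          Nat.add_lt_add_left (gInd_lt t y) _
      _ = (M - psi μE μ y + 1) * (2 * Fintype.card H) := by ring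
      _ ≤ (M - psi μE μ x) * (2 * Fintype.card H) := Nat.mul_le_mul_right _ hsub
      _ ≤ kappa μE μ tp t x := Nat.le_add_right _ _
  omega

lemma chosen_of_kappa_lt {t : T} {x y : H} (hk : kappa μE μ tp t x < kappa μE μ tp t y)
    (hpsi : psi μE μ x = psi μE μ y) (hx : ∃ w, tp w = t ∧ μ w = x) :
    ∃ w, tp w = t ∧ μ w = y := by
  have hg : gInd tp μ t x < gInd tp μ t y := by
    have heq : kappa μE μ tp t x = (Fintype.card H * Fintype.card H + Fintype.card H
        - psi μE μ y) * (2 * Fintype.card H) + gInd tp μ t x := by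
      rw [kappa, hpsi]
    rw [heq, kappa] at hk
    omega
  rw [gInd, gInd, if_pos hx] at hg
  have h1 : ((Fintype.equivFin H) y : ℕ) < Fintype.card H := ((Fintype.equivFin H) y).2
  by_contra hcon
  rw [if_neg hcon] at hg
  omega

end Kappa

end Stmt11Aux

/-- full characterization: the problem is rationalizable iff any two
same-type agents in the same SCC of G^big receive the same house type. -/
theorem stmt11 {A H T : Type*} [Fintype A] [Fintype H] (tp : A → T)
    (μE μ : A → H) (hbal : BalancedAlloc μE μ) :
    Rationalizable tp μE μ ↔
      ∀ a b : A, tp a = tp b → sameSCC μE μ a b → μ a = μ b := by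
  classical
  constructor
  · rintro ⟨P, hnb⟩ a b htp hscc
    by_contra hne
    letI : LinearOrder H := P (tp a)
    rcases Ne.lt_or_gt hne with hlt | hlt
    · obtain ⟨C, μ', h1, h2, h3, h4⟩ := Stmt11Aux.blocking_of_lt tp hbal P htp hscc hlt
      exact hnb ⟨C, μ', h1, h2, h3, h4⟩
    · have hlt' : (P (tp b)).lt (μ b) (μ a) := by rw [← htp]; exact hlt
      obtain ⟨C, μ', h1, h2, h3, h4⟩ :=
        Stmt11Aux.blocking_of_lt tp hbal P htp.symm ⟨hscc.2, hscc.1⟩ hlt'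
      exact hnb ⟨C, μ', h1, h2, h3, h4⟩
  · intro hcond
    refine ⟨fun t => LinearOrder.lift' (Stmt11Aux.kappa μE μ tp t) (Stmt11Aux.kappa_inj t),
      ?_⟩
    rintro ⟨C, μ', hCne, hmeq, hweak, a0, ha0, hstrict⟩
    -- the preference order is by κ
    have hweak' : ∀ x ∈ C, Stmt11Aux.kappa μE μ tp (tp x) (μ x) ≤
        Stmt11Aux.kappa μE μ tp (tp x) (μ' x) := fun x hx => hweak x hx
    have hstrict' : Stmt11Aux.kappa μE μ tp (tp a0) (μ a0) <
        Stmt11Aux.kappa μE μ tp (tp a0) (μ' a0) := hstrict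
    -- pointwise ψ decrease
    have hpoint : ∀ x ∈ C, Stmt11Aux.psi μE μ (μ' x) ≤ Stmt11Aux.psi μE μ (μ x) :=
      fun x hx => Stmt11Aux.psi_le_of_kappa_le (hweak' x hx)
    -- sum equality
    have hψal : ∀ x : A, Stmt11Aux.psi μE μ (μE x) = Stmt11Aux.psi μE μ (μ x) :=
      fun x => (Stmt11Aux.psi_eq_of_hsim (Stmt11Aux.hsim_mu_muE hbal x)).symm
    have hsum : ∑ x ∈ C, Stmt11Aux.psi μE μ (μ' x) = ∑ x ∈ C, Stmt11Aux.psi μE μ (μ x) := by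
      have h1 := congrArg (fun s : Multiset H => (s.map (Stmt11Aux.psi μE μ)).sum) hmeq
      simp only [Multiset.map_map] at h1
      have h2 : ∑ x ∈ C, Stmt11Aux.psi μE μ (μ' x) =
          (C.val.map (Stmt11Aux.psi μE μ ∘ μ')).sum := rfl
      have h3 : ∑ x ∈ C, Stmt11Aux.psi μE μ (μE x) =
          (C.val.map (Stmt11Aux.psi μE μ ∘ μE)).sum := rfl
      rw [h2, h1, ← h3]
      exact Finset.sum_congr rfl fun x _ => hψal x
    have hpe : ∀ x ∈ C, Stmt11Aux.psi μE μ (μ' x) = Stmt11Aux.psi μE μ (μ x) :=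
      (Finset.sum_eq_sum_iff_of_le hpoint).mp hsum
    -- the strict improver contradicts the SCC condition
    have hψ0 : Stmt11Aux.psi μE μ (μ a0) = Stmt11Aux.psi μE μ (μ' a0) := (hpe a0 ha0).symm
    obtain ⟨w, hw1, hw2⟩ :=
      Stmt11Aux.chosen_of_kappa_lt hstrict' hψ0 ⟨a0, rfl, rfl⟩
    have hsim : Stmt11Aux.Hsim μE μ (μ w) (μ a0) := by
      rw [hw2]
      exact Stmt11Aux.hsim_symm (Stmt11Aux.hsim_of_psi_eq hψ0)
    have heq : μ w = μ a0 := hcond w a0 hw1 ((Stmt11Aux.sameSCC_iff hbal w a0).mpr hsim)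
    rw [heq] at hw2
    rw [hw2] at hstrict'
    exact lt_irrefl _ hstrict'
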